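/- With the Sabra shell-model nonlinearity B as above, for every u in the weighted ℓ² space H = E_0 and every v ∈ E_{1/2}, the real part of the pairing ⟨B(u,v), v⟩ = Σ_n b_n(u,v)·conj(v_n) vanishes: Re⟨B(u,v), v⟩ = 0. -/

import Mathlib

open scoped ComplexConjugate

/-- The dyadic wavenumbers `λ_n = k₀ 2^n` of the shell models. -/
noncomputable def shellLam (k0 : ℝ) (n : ℕ) : ℝ := k0 * 2 ^ n

/-- The Sabra shell-model nonlinearity `b_n(u,v)`, with the convention that the
coordinates of index `≤ 0` vanish. -/
noncomputable def sabraB (k0 : ℝ) (u v : ℕ → ℂ) (n : ℕ) : ℂ :=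
  (Complex.I / 3) * (shellLam k0 (n + 1)) *
      (conj (v (n + 1)) * u (n + 2) + 2 * conj (u (n + 1)) * v (n + 2))
    + (Complex.I / 3) * (shellLam k0 n) *
      (conj (u (n - 1)) * v (n + 1) - conj (v (n - 1)) * u (n + 1))
    + (Complex.I / 3) * (shellLam k0 (n - 1)) *
      (2 * u (n - 1) * v (n - 2) + u (n - 2) * v (n - 1))

open Filter Topology

/-- The "boundary" quantity in the telescoping identity for the Sabra energy flux. -/
noncomputable def sabraP (k0 : ℝ) (u v : ℕ → ℂ) (n : ℕ) : ℂ :=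
  -(Complex.I / 3) * (shellLam k0 (n+1)) * conj (v n) * u (n+2) * conj (v (n+1))
    + (Complex.I / 3) * (shellLam k0 n) * 2 * u n * v (n-1) * conj (v (n+1))
    + (Complex.I / 3) * (shellLam k0 (n+1)) * 2 * u (n+1) * v n * conj (v (n+2))
    + (Complex.I / 3) * (shellLam k0 n) * u (n-1) * v n * conj (v (n+1))

noncomputable def sabraPsi (k0 : ℝ) (u v : ℕ → ℂ) (n : ℕ) : ℂ :=
  sabraP k0 u v n + conj (sabraP k0 u v n)

lemma sabraKey (k0 : ℝ) (u v : ℕ → ℂ) (hu0 : u 0 = 0) (hv0 : v 0 = 0) (n : ℕ) :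
    sabraB k0 u v (n+1) * conj (v (n+1)) + conj (sabraB k0 u v (n+1) * conj (v (n+1)))
      = sabraPsi k0 u v n - sabraPsi k0 u v (n+1) := by
  rcases n with _ | k
  · simp only [sabraB, sabraPsi, sabraP]
    norm_num [hu0, hv0]
    simp only [map_add, map_mul, map_sub, map_neg, map_div₀, map_ofNat, Complex.conj_conj,
      Complex.conj_I, Complex.conj_ofReal, map_one]
    ring
  · have e1 : k + 1 + 1 - 1 = k + 1 := rfl
    have e2 : k + 1 + 1 - 2 = k := rfl
    have e3 : k + 1 - 1 = k := rfl
    simp only [sabraB, sabraPsi, sabraP, e1, e2, e3]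
    simp only [map_add, map_mul, map_sub, map_neg, map_div₀, map_ofNat, Complex.conj_conj,
      Complex.conj_I, Complex.conj_ofReal, map_one]
    ring

lemma shellLam_succ (k0 : ℝ) (n : ℕ) : shellLam k0 (n+1) = 2 * shellLam k0 n := by
  simp [shellLam, pow_succ]; ring


set_option maxHeartbeats 1000000 in
/-- Energy conservation of the Sabra shell model: for `u ∈ H = E_0` and `v ∈ E_{1/2}`,
`Re⟨B(u,v), v⟩ = Re ∑_{n ≥ 1} b_n(u,v) conj(v_n) = 0`. -/
theorem stmt4 (k0 : ℝ) (hk0 : 0 < k0) (u v : ℕ → ℂ) (hu0 : u 0 = 0) (hv0 : v 0 = 0)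
    (hu : Summable (fun n : ℕ => ‖u n‖ ^ 2))
    (hv : Summable (fun n : ℕ => (shellLam k0 n) ^ 2 * ‖v n‖ ^ 2))
    (hpair : Summable (fun n : ℕ => sabraB k0 u v (n + 1) * conj (v (n + 1)))) :
    (∑' n : ℕ, sabraB k0 u v (n + 1) * conj (v (n + 1))).re = 0 := by
  set f : ℕ → ℂ := fun n => sabraB k0 u v (n + 1) * conj (v (n + 1)) with hf
  set r : ℕ → ℝ := fun n => (sabraPsi k0 u v n).re with hr
  -- basic limits
  have hlam : ∀ n, 0 < shellLam k0 n := fun n => by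
    have : (0:ℝ) < 2 ^ n := by positivity
    simpa [shellLam] using mul_pos hk0 this
  have hun : Tendsto (fun n => ‖u n‖) atTop (𝓝 0) := by
    have h2 := (Real.continuous_sqrt.tendsto 0).comp hu.tendsto_atTop_zero
    rw [Real.sqrt_zero] at h2
    exact h2.congr fun n => by simp [Function.comp, Real.sqrt_sq (norm_nonneg (u n))]
  have hU : Tendsto u atTop (𝓝 0) := tendsto_zero_iff_norm_tendsto_zero.mpr hun
  have hlvn : Tendsto (fun n => shellLam k0 n * ‖v n‖) atTop (𝓝 0) := by
    have h2 := (Real.continuous_sqrt.tendsto 0).comp hv.tendsto_atTop_zero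
    rw [Real.sqrt_zero] at h2
    refine h2.congr fun n => ?_
    simp only [Function.comp]
    rw [← mul_pow, Real.sqrt_sq (mul_nonneg (hlam n).le (norm_nonneg _))]
  set L : ℕ → ℂ := fun n => (shellLam k0 n : ℂ) * v n with hL
  have hLV : Tendsto L atTop (𝓝 0) := by
    rw [tendsto_zero_iff_norm_tendsto_zero]
    refine hlvn.congr fun n => ?_
    simp [hL, Complex.norm_real, abs_of_pos (hlam n)]
  have hV : Tendsto v atTop (𝓝 0) := by
    rw [tendsto_zero_iff_norm_tendsto_zero]
    refine squeeze_zero (fun n => norm_nonneg _) (g := fun n => (shellLam k0 n * ‖v n‖) / k0)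
      (fun n => ?_) (by simpa using hlvn.div_const k0)
    rw [le_div_iff₀ hk0]
    have h1 : k0 ≤ shellLam k0 n := by
      have : (1:ℝ) ≤ 2 ^ n := one_le_pow₀ (by norm_num)
      simpa [shellLam] using (le_mul_of_one_le_right hk0.le this)
    nlinarith [norm_nonneg (v n)]
  -- helpers for limits
  have shift : ∀ (g : ℕ → ℂ), Tendsto g atTop (𝓝 0) → ∀ k : ℕ,
      Tendsto (fun n => g (n + k)) atTop (𝓝 0) :=
    fun g hg k => hg.comp (tendsto_add_atTop_nat k)
  have shift' : ∀ (g : ℕ → ℂ), Tendsto g atTop (𝓝 0) →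
      Tendsto (fun n => g (n - 1)) atTop (𝓝 0) :=
    fun g hg => hg.comp (tendsto_sub_atTop_nat 1)
  have hconj : ∀ (g : ℕ → ℂ), Tendsto g atTop (𝓝 0) →
      Tendsto (fun n => conj (g n)) atTop (𝓝 0) := by
    intro g hg
    have := (Complex.continuous_conj.tendsto 0).comp hg
    simpa [Function.comp_def] using this
  -- Tendsto of sabraP via an equivalent formula
  have hq : Tendsto (fun n =>
      -(Complex.I / 3) * (conj (v n) * u (n+2) * conj (L (n+1)))
      + (Complex.I / 3) * (u n * v (n-1) * conj (L (n+1)))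
      + (Complex.I / 3) * (u (n+1) * v n * conj (L (n+2)))
      + (Complex.I / 3) * (u (n-1) * conj (v (n+1)) * L n)) atTop (𝓝 0) := by
    have t1 := ((hconj _ hV).mul (shift _ hU 2)).mul (hconj _ (shift _ hLV 1))
    have t2 := ((hU.mul (shift' _ hV)).mul (hconj _ (shift _ hLV 1)))
    have t3 := (((shift _ hU 1).mul hV).mul (hconj _ (shift _ hLV 2)))
    have t4 := (((shift' _ hU).mul (hconj _ (shift _ hV 1))).mul hLV)
    have := (((t1.const_mul (-(Complex.I/3))).add (t2.const_mul (Complex.I/3))).add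
      (t3.const_mul (Complex.I/3))).add (t4.const_mul (Complex.I/3))
    simpa using this
  have hP : Tendsto (fun n => sabraP k0 u v n) atTop (𝓝 0) := by
    refine hq.congr fun n => ?_
    simp only [sabraP, hL, map_mul, Complex.conj_ofReal, shellLam_succ]
    push_cast
    ring
  have hPsi : Tendsto (fun n => sabraPsi k0 u v n) atTop (𝓝 0) := by
    have := hP.add (hconj _ hP)
    simpa [sabraPsi] using this
  have hrt : Tendsto r atTop (𝓝 0) := by
    have := (Complex.continuous_re.tendsto 0).comp hPsi
    simpa [Function.comp_def, hr] using this
  -- ψ 0 = 0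
  have hr0 : r 0 = 0 := by
    simp [hr, sabraPsi, sabraP, hu0, hv0]
  -- relation between re f and r
  have hkey : ∀ n, (f n).re = (r n - r (n+1)) / 2 := by
    intro n
    have h := congrArg Complex.re (sabraKey k0 u v hu0 hv0 n)
    rw [Complex.add_conj] at h
    simp only [Complex.ofReal_re, Complex.sub_re] at h
    rw [hf, hr]
    simp only
    linarith [h]
  -- partial sums
  have hsum : ∀ N, ∑ n ∈ Finset.range N, (f n).re = (r 0 - r N) / 2 := by
    intro N
    calc ∑ n ∈ Finset.range N, (f n).re = ∑ n ∈ Finset.range N, (r n - r (n+1)) / 2 := by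
          exact Finset.sum_congr rfl fun n _ => hkey n
      _ = (∑ n ∈ Finset.range N, (r n - r (n+1))) / 2 := by rw [Finset.sum_div]
      _ = (r 0 - r N) / 2 := by rw [Finset.sum_range_sub' r N]
  -- conclude
  have hhs : HasSum (fun n => (f n).re) ((∑' n, f n).re) :=
    Complex.reCLM.hasSum hpair.hasSum
  have h1 := hhs.tendsto_sum_nat
  have h2 : Tendsto (fun N => ∑ n ∈ Finset.range N, (f n).re) atTop (𝓝 0) := by
    have : Tendsto (fun N => (r 0 - r N) / 2) atTop (𝓝 ((r 0 - 0) / 2)) :=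
      ((tendsto_const_nhds.sub hrt).div_const 2)
    have h0 : (r 0 - (0:ℝ)) / 2 = 0 := by rw [hr0]; ring
    rw [h0] at this
    exact Tendsto.congr (fun N => (hsum N).symm) this
  exact tendsto_nhds_unique h1 h2
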